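/- Every G-type quantum walk can be expressed through an A-type quantum walk with flip-flop shift: for every shift family σ and every coin H = (H_j)_{j∈V}, letting P^{(j)} be the permutation matrix on ℂ^{N(j)} representing σ_j (sending e_i to e_{σ_j(i)}) and H̃_j = H_j P^{(j)}, one has U^G_σ[H_j : j∈V] = (U^A_{ff}[H̃_j† : j∈V])†. -/

import Mathlib

open Matrix Complex BigOperators

section QWFramework

variable {V : Type*}

instance arcDecPred (G : SimpleGraph V) [DecidableRel G.Adj] :
    DecidablePred fun p : V × V => G.Adj p.1 p.2 :=
  fun p => inferInstanceAs (Decidable (G.Adj p.1 p.2))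

instance nbrDecPred (G : SimpleGraph V) [DecidableRel G.Adj] (u : V) :
    DecidablePred (G.Adj u) :=
  fun w => inferInstanceAs (Decidable (G.Adj u w))

/-- The symmetric arc set `D(G)` of a graph: ordered pairs of adjacent vertices. -/
abbrev Arc (G : SimpleGraph V) : Type _ := {p : V × V // G.Adj p.1 p.2}

variable [Fintype V] [DecidableEq V]

/-- The shift (permutation) operator `S_σ` of a shift family `σ`, acting on `ℂ^{D(G)}`
by `S_σ |i,j⟩ = |j, σ_j(i)⟩`. -/
noncomputable def shiftOp (G : SimpleGraph V) [DecidableRel G.Adj]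
    (σ : ∀ u : V, Equiv.Perm {w : V // G.Adj u w}) :
    Matrix (Arc G) (Arc G) ℂ :=
  fun a b => if a.1.1 = b.1.2 ∧ a.1.2 = (σ b.1.2 ⟨b.1.1, b.2.symm⟩).1 then 1 else 0

/-- The flip-flop shift family: the identity permutation at every vertex. -/
def ffFam (G : SimpleGraph V) : ∀ u : V, Equiv.Perm {w : V // G.Adj u w} :=
  fun _ => Equiv.refl _

/-- The flip-flop shift operator `S`, with `S|i,j⟩ = |j,i⟩`. -/
noncomputable def ffShift (G : SimpleGraph V) [DecidableRel G.Adj] : Matrix (Arc G) (Arc G) ℂ :=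
  shiftOp G (ffFam G)

/-- The block-diagonal coin operator `C = ⊕_u H_u`, acting by
`C|i,j⟩ = Σ_{k∈N(i)} (H_i)_{k,j} |i,k⟩`. -/
noncomputable def coinOp (G : SimpleGraph V) [DecidableRel G.Adj]
    (H : ∀ u : V, Matrix {w : V // G.Adj u w} {w : V // G.Adj u w} ℂ) :
    Matrix (Arc G) (Arc G) ℂ :=
  fun a b => if h : a.1.1 = b.1.1 then H b.1.1 ⟨a.1.2, by rw [← h]; exact a.2⟩ ⟨b.1.2, b.2⟩ else 0

/-- The G-type (Gudder type) coined quantum walk `U^G_σ[H] = C·S_σ`. -/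
noncomputable def gWalk (G : SimpleGraph V) [DecidableRel G.Adj]
    (σ : ∀ u : V, Equiv.Perm {w : V // G.Adj u w})
    (H : ∀ u : V, Matrix {w : V // G.Adj u w} {w : V // G.Adj u w} ℂ) :
    Matrix (Arc G) (Arc G) ℂ :=
  coinOp G H * shiftOp G σ

/-- The A-type (Ambainis type) coined quantum walk `U^A_σ[H] = S_σ·C`. -/
noncomputable def aWalk (G : SimpleGraph V) [DecidableRel G.Adj]
    (σ : ∀ u : V, Equiv.Perm {w : V // G.Adj u w})
    (H : ∀ u : V, Matrix {w : V // G.Adj u w} {w : V // G.Adj u w} ℂ) :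
    Matrix (Arc G) (Arc G) ℂ :=
  shiftOp G σ * coinOp G H

end QWFramework

/-- The permutation matrix of a permutation `π`, sending the basis vector `e_b` to `e_{π b}`. -/
noncomputable def permMat {α : Type*} [Fintype α] [DecidableEq α] (π : Equiv.Perm α) :
    Matrix α α ℂ :=
  fun a b => if a = π b then 1 else 0

/-- Every G-type QW is expressed by an A-type QW with flip-flop shift:
with `P^{(j)}` the permutation matrix of `σ_j` and `H̃_j = H_j·P^{(j)}`,
`U^G_σ[H] = (U^A_ff[H̃†])†`. -/
theorem gWalk_eq_dagger_aWalk_ff {V : Type*} [Fintype V] [DecidableEq V]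
    (G : SimpleGraph V) [DecidableRel G.Adj] (hG : G.Connected)
    (σ : ∀ u : V, Equiv.Perm {w : V // G.Adj u w})
    (H : ∀ u : V, Matrix {w : V // G.Adj u w} {w : V // G.Adj u w} ℂ)
    (hH : ∀ u : V, H u ∈ Matrix.unitaryGroup {w : V // G.Adj u w} ℂ) :
    gWalk G σ H = (aWalk G (ffFam G) (fun j => (H j * permMat (σ j))ᴴ))ᴴ := by
  ext a b
  obtain ⟨⟨i, j⟩, hij⟩ := a
  obtain ⟨⟨k, l⟩, hkl⟩ := b
  have hσ : G.Adj l ((σ l ⟨k, hkl.symm⟩ : {w : V // G.Adj l w}) : V) :=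
    (σ l ⟨k, hkl.symm⟩).2
  have hL : gWalk G σ H ⟨(i,j),hij⟩ ⟨(k,l),hkl⟩ =
      (if h : i = l then H l ⟨j, by rw [← h]; exact hij⟩ (σ l ⟨k, hkl.symm⟩) else 0) := by
    rw [gWalk, Matrix.mul_apply]
    rw [Finset.sum_eq_single (⟨(l, ((σ l ⟨k, hkl.symm⟩ : {w : V // G.Adj l w}) : V)), hσ⟩ : Arc G)]
    · simp only [coinOp, shiftOp]
      simp only [and_self, if_true]
      split
      · rw [mul_one]
      · rw [zero_mul]
    · intro c _ hc
      simp only [shiftOp]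
      rw [if_neg, mul_zero]
      intro hcon
      apply hc
      apply Subtype.ext
      exact Prod.ext hcon.1 hcon.2
    · intro h
      exact absurd (Finset.mem_univ _) h
  have hR : aWalk G (ffFam G) (fun u => (H u * permMat (σ u))ᴴ) ⟨(k,l),hkl⟩ ⟨(i,j),hij⟩ =
      (if h : l = i then star ((H i * permMat (σ i)) ⟨j, hij⟩ ⟨k, by rw [h] at hkl; exact hkl.symm⟩) else 0) := by
    rw [aWalk, Matrix.mul_apply]
    rw [Finset.sum_eq_single (⟨(l, k), hkl.symm⟩ : Arc G)]
    · simp only [coinOp, shiftOp, ffFam, Equiv.refl_apply]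
      simp only [and_self, if_true]
      split
      · rw [one_mul, Matrix.conjTranspose_apply]
      · rw [mul_zero]
    · intro c _ hc
      simp only [shiftOp]
      rw [if_neg, zero_mul]
      intro hcon
      apply hc
      apply Subtype.ext
      exact Prod.ext hcon.2.symm hcon.1.symm
    · intro h
      exact absurd (Finset.mem_univ _) h
  rw [Matrix.conjTranspose_apply, hL, hR]
  by_cases h : i = l
  · subst h
    rw [dif_pos rfl, dif_pos rfl, star_star]
    rw [Matrix.mul_apply]
    rw [Finset.sum_eq_single (σ i ⟨k, hkl.symm⟩)]
    · simp [permMat]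
    · intro m _ hm
      simp only [permMat]
      rw [if_neg hm, mul_zero]
    · intro h
      exact absurd (Finset.mem_univ _) h
  · rw [dif_neg h, dif_neg (fun h' => h h'.symm), star_zero]
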